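/- For any partial Boolean function f : X → {1,-1} with X ⊆ {1,-1}^n, the minimal query complexity of an unbounded-error randomized query (UPP) algorithm computing f equals the threshold degree of f. -/

import Mathlib

open scoped Classical

/-- Decision trees querying coordinates of an input in `{1,-1}ⁿ`. -/
inductive DTree (n : ℕ) : Type
  | leaf : Bool → DTree n
  | node : Fin n → DTree n → DTree n → DTree n

/-- Depth of a decision tree. -/
def DTree.depth {n : ℕ} : DTree n → ℕ
  | .leaf _ => 0
  | .node _ l r => max l.depth r.depth + 1

/-- Evaluation of a decision tree on `x ∈ {1,-1}ⁿ` (branching on `xᵢ = 1`),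
with output read as `1` for `true` and `-1` for `false`. -/
noncomputable def DTree.eval {n : ℕ} : DTree n → (Fin n → ℝ) → Bool
  | .leaf b, _ => b
  | .node i l r, x => if x i = 1 then l.eval x else r.eval x


noncomputable def treePoly {n : ℕ} : DTree n → MvPolynomial (Fin n) ℝ
  | .leaf b => MvPolynomial.C (if b then 1 else -1)
  | .node i l r =>
      MvPolynomial.C (1/2) * (1 + MvPolynomial.X i) * treePoly l
      + MvPolynomial.C (1/2) * (1 - MvPolynomial.X i) * treePoly r

lemma aux_deg {n : ℕ} (c : ℝ) (s : MvPolynomial (Fin n) ℝ) (hs : s.totalDegree ≤ 1)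
    (p : MvPolynomial (Fin n) ℝ) :
    (MvPolynomial.C c * s * p).totalDegree ≤ 1 + p.totalDegree := by
  refine (MvPolynomial.totalDegree_mul _ _).trans ?_
  gcongr
  refine (MvPolynomial.totalDegree_mul _ _).trans ?_
  simpa [MvPolynomial.totalDegree_C] using hs

lemma treePoly_degree {n : ℕ} (T : DTree n) : (treePoly T).totalDegree ≤ T.depth := by
  induction T with
  | leaf b => simp [treePoly, DTree.depth, MvPolynomial.totalDegree_C]
  | node i l r hl hr =>
    refine (MvPolynomial.totalDegree_add _ _).trans ?_
    have hs1 : ((1 : MvPolynomial (Fin n) ℝ) + MvPolynomial.X i).totalDegree ≤ 1 := by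
      refine (MvPolynomial.totalDegree_add _ _).trans ?_
      simp [MvPolynomial.totalDegree_one, MvPolynomial.totalDegree_X]
    have hs2 : ((1 : MvPolynomial (Fin n) ℝ) - MvPolynomial.X i).totalDegree ≤ 1 := by
      rw [sub_eq_add_neg]
      refine (MvPolynomial.totalDegree_add _ _).trans ?_
      simp [MvPolynomial.totalDegree_one, MvPolynomial.totalDegree_neg,
        MvPolynomial.totalDegree_X]
    have h1 := (aux_deg (1/2) _ hs1 (treePoly l)).trans (by omega : 1 + (treePoly l).totalDegree ≤ 1 + l.depth)
    have h2 := (aux_deg (1/2) _ hs2 (treePoly r)).trans (by omega : 1 + (treePoly r).totalDegree ≤ 1 + r.depth)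
    simp only [DTree.depth]
    omega

lemma treePoly_eval {n : ℕ} (T : DTree n) (x : Fin n → ℝ) (hx : ∀ i, x i = 1 ∨ x i = -1) :
    MvPolynomial.eval x (treePoly T) = if T.eval x then 1 else -1 := by
  induction T with
  | leaf b => cases b <;> simp [treePoly, DTree.eval]
  | node i l r hl hr =>
    rcases hx i with h | h
    · simp [treePoly, DTree.eval, h, hl, hr]
      ring_nf
    · have h' : x i ≠ 1 := by rw [h]; norm_num
      simp only [treePoly, DTree.eval, if_neg h', map_add, map_mul, map_one, map_sub,
        MvPolynomial.eval_C, MvPolynomial.eval_X, h, hl, hr]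
      norm_num

def chainTree {n : ℕ} (b : Bool) : List (Fin n) → DTree n
  | [] => .leaf b
  | i :: L => .node i (chainTree b L) (chainTree (!b) L)

lemma chainTree_depth {n : ℕ} : ∀ (L : List (Fin n)) (b : Bool),
    (chainTree b L).depth = L.length := by
  intro L
  induction L with
  | nil => intro b; simp [chainTree, DTree.depth]
  | cons i L ih => intro b; simp [chainTree, DTree.depth, ih]

lemma chainTree_eval {n : ℕ} (x : Fin n → ℝ) (hx : ∀ i, x i = 1 ∨ x i = -1) :
    ∀ (L : List (Fin n)) (b : Bool),
    (if (chainTree b L).eval x then (1:ℝ) else -1)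
      = (if b then 1 else -1) * (L.map x).prod := by
  intro L
  induction L with
  | nil => intro b; simp [chainTree, DTree.eval]
  | cons i L ih =>
    intro b
    rcases hx i with h | h
    · simp [chainTree, DTree.eval, h, ih b]
      try ring
    · have h' : x i ≠ 1 := by rw [h]; norm_num
      simp only [chainTree, DTree.eval, List.map_cons, List.prod_cons, ih, h,
        (by norm_num : ¬((-1:ℝ) = 1)), if_false]
      cases b <;> simp <;> ring

lemma pow_pm (a : ℝ) (ha : a = 1 ∨ a = -1) (k : ℕ) :
    a ^ k = if Odd k then a else 1 := by
  rcases ha with h | h <;> subst h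
  · simp
  · rcases Nat.even_or_odd k with hk | hk
    · simp [hk.neg_one_pow, hk, Nat.not_odd_iff_even.2 hk]
    · simp [hk.neg_one_pow, hk]

lemma key_lemma {I : Type} [Fintype I] (w : I → ℝ) (o : I → ℝ) (c : ℝ)
    (ho : ∀ i, o i = 1 ∨ o i = -1) (hc : c = 1 ∨ c = -1) (hw : ∑ i, w i = 1) :
    c * ∑ i, w i * o i
      = 2 * (∑ i ∈ Finset.univ.filter (fun i => o i = c), w i) - 1 := by
  have hc2 : c * c = 1 := by rcases hc with h | h <;> subst h <;> norm_num
  have hsplit := Finset.sum_filter_add_sum_filter_not Finset.univ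
    (fun i => o i = c) (fun i => w i * o i)
  have hsplitw := Finset.sum_filter_add_sum_filter_not Finset.univ
    (fun i => o i = c) (fun i => w i)
  have h1 : ∑ i ∈ Finset.univ.filter (fun i => o i = c), w i * o i
      = c * ∑ i ∈ Finset.univ.filter (fun i => o i = c), w i := by
    rw [Finset.mul_sum]
    refine Finset.sum_congr rfl fun i hi => ?_
    have := (Finset.mem_filter.1 hi).2
    rw [this]; ring
  have h2 : ∑ i ∈ Finset.univ.filter (fun i => ¬ o i = c), w i * o i
      = -c * ∑ i ∈ Finset.univ.filter (fun i => ¬ o i = c), w i := by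
    rw [Finset.mul_sum]
    refine Finset.sum_congr rfl fun i hi => ?_
    have hi' := (Finset.mem_filter.1 hi).2
    have : o i = -c := by
      rcases hc with h' | h' <;> subst h' <;> rcases ho i with h | h <;> simp [h] at hi' ⊢
    rw [this]; ring
  rw [hw] at hsplitw
  rw [← hsplit, h1, h2]
  linear_combination (∑ i ∈ Finset.univ.filter (fun i => o i = c), w i
    - ∑ i ∈ Finset.univ.filter (fun i => ¬ o i = c), w i) * hc2 - hsplitw


/-- **UPP query complexity equals threshold degree.** For a partial Boolean
function `f : X → {1,-1}` on `X ⊆ {1,-1}ⁿ` and every `q`, there exists an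
unbounded-error randomized query algorithm of query complexity `q` computing
`f` (a distribution over depth-`≤ q` decision trees outputting `f(x)` with
probability `> 1/2` on each `x ∈ X`) if and only if there exists a real
polynomial of degree at most `q` sign-representing `f` on `X`. Hence the
minimal UPP query complexity equals the threshold degree. -/
theorem stmt19 (n : ℕ) (X : Finset (Fin n → ℝ))
    (hX : ∀ x ∈ X, ∀ i, x i = 1 ∨ x i = -1)
    (f : (Fin n → ℝ) → ℝ) (hf : ∀ x ∈ X, f x = 1 ∨ f x = -1)
    (q : ℕ) :
    (∃ (I : Type) (_ : Fintype I) (w : I → ℝ) (T : I → DTree n),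
      (∀ i, 0 ≤ w i) ∧ ∑ i, w i = 1 ∧ (∀ i, (T i).depth ≤ q) ∧
      ∀ x ∈ X, 1 / 2 <
        ∑ i ∈ Finset.univ.filter
            (fun i : I => (if (T i).eval x then (1:ℝ) else -1) = f x), w i)
    ↔ (∃ p : MvPolynomial (Fin n) ℝ, p.totalDegree ≤ q ∧
        ∀ x ∈ X, 0 < f x * MvPolynomial.eval x p) := by
  constructor
  · rintro ⟨I, instI, w, T, hw0, hw1, hdep, hmaj⟩
    refine ⟨∑ i, MvPolynomial.C (w i) * treePoly (T i), ?_, ?_⟩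
    · refine MvPolynomial.totalDegree_finsetSum_le fun i _ => ?_
      refine (MvPolynomial.totalDegree_mul _ _).trans ?_
      simpa [MvPolynomial.totalDegree_C] using (treePoly_degree (T i)).trans (hdep i)
    · intro x hx
      have hev : MvPolynomial.eval x (∑ i, MvPolynomial.C (w i) * treePoly (T i))
          = ∑ i, w i * (if (T i).eval x then (1:ℝ) else -1) := by
        rw [map_sum]
        refine Finset.sum_congr rfl fun i _ => ?_
        rw [map_mul, MvPolynomial.eval_C, treePoly_eval _ _ (hX x hx)]
      rw [hev, key_lemma w _ (f x) (fun i => by split_ifs <;> simp) (hf x hx) hw1]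
      have := hmaj x hx
      linarith
  · rintro ⟨p, hdeg, hsgn⟩
    by_cases hXe : X = ∅
    · subst hXe
      refine ⟨Unit, inferInstance, fun _ => 1, fun _ => .leaf true, fun _ => zero_le_one,
        by simp, fun _ => by simp [DTree.depth], by simp⟩
    · -- X nonempty, hence p ≠ 0
      obtain ⟨x₀, hx₀⟩ := Finset.nonempty_iff_ne_empty.2 hXe
      have hp0 : p ≠ 0 := by
        intro h
        have := hsgn x₀ hx₀
        simp [h] at this
      set W : ℝ := ∑ d ∈ p.support, |p.coeff d| with hW
      have hWpos : 0 < W := by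
        have hne : p.support.Nonempty := MvPolynomial.support_nonempty.2 hp0
        obtain ⟨d, hd⟩ := hne
        refine Finset.sum_pos' (fun d _ => abs_nonneg _) ⟨d, hd, ?_⟩
        exact abs_pos.2 (MvPolynomial.mem_support_iff.1 hd)
      refine ⟨{d // d ∈ p.support}, inferInstance,
        fun d => |p.coeff d.1| / W,
        fun d => chainTree (decide (0 < p.coeff d.1))
          ((d.1.support.filter (fun i => Odd (d.1 i))).toList),
        fun d => div_nonneg (abs_nonneg _) hWpos.le, ?_, ?_, ?_⟩
      · rw [← Finset.sum_div,
          show ∑ d : {d // d ∈ p.support}, |p.coeff d.1| = ∑ d ∈ p.support, |p.coeff d| from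
            Finset.sum_coe_sort p.support (fun d => |p.coeff d|)]
        field_simp
        exact hW.symm
      · intro d
        rw [chainTree_depth]
        have h1 : ((d.1.support.filter (fun i => Odd (d.1 i))).toList).length
            = (d.1.support.filter (fun i => Odd (d.1 i))).card := Finset.length_toList _
        rw [h1]
        calc (d.1.support.filter (fun i => Odd (d.1 i))).card
            ≤ d.1.support.card := Finset.card_filter_le _ _
          _ ≤ ∑ i ∈ d.1.support, d.1 i := by
              have h := Finset.card_nsmul_le_sum d.1.support (fun i => d.1 i) 1
                (fun i hi => Nat.one_le_iff_ne_zero.2 (Finsupp.mem_support_iff.1 hi))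
              simpa using h
          _ ≤ p.totalDegree := MvPolynomial.le_totalDegree d.2
          _ ≤ q := hdeg
      · intro x hx
        have hxpm := hX x hx
        have hoval : ∀ d : {d // d ∈ p.support},
            (|p.coeff d.1| / W) * (if (chainTree (decide (0 < p.coeff d.1))
              ((d.1.support.filter (fun i => Odd (d.1 i))).toList)).eval x then (1:ℝ) else -1)
            = (p.coeff d.1 / W) * ∏ i ∈ d.1.support, x i ^ d.1 i := by
          intro d
          have hprod : ∏ i ∈ d.1.support, x i ^ d.1 i
              = ∏ i ∈ d.1.support.filter (fun i => Odd (d.1 i)), x i := by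
            rw [Finset.prod_filter]
            exact Finset.prod_congr rfl fun i _ => (pow_pm (x i) (hxpm i) (d.1 i))
          have hlist : (((d.1.support.filter (fun i => Odd (d.1 i))).toList).map x).prod
              = ∏ i ∈ d.1.support.filter (fun i => Odd (d.1 i)), x i :=
            Finset.prod_map_toList _ _
          rw [chainTree_eval x hxpm, hlist, ← hprod]
          rcases lt_trichotomy (p.coeff d.1) 0 with hc | hc | hc
          · rw [decide_eq_false (not_lt.2 hc.le)]
            simp only [Bool.false_eq_true, if_false]
            rw [abs_of_neg hc]
            ring
          · exact absurd hc (MvPolynomial.mem_support_iff.1 d.2)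
          · rw [decide_eq_true hc]
            simp only [if_true]
            rw [abs_of_pos hc]
            ring
        have hsum1 : ∑ d : {d // d ∈ p.support}, |p.coeff d.1| / W = 1 := by
          rw [← Finset.sum_div, Finset.sum_coe_sort p.support (fun d => |p.coeff d|)]
          field_simp
          exact hW.symm
        have hevp : ∑ d : {d // d ∈ p.support}, (|p.coeff d.1| / W) *
              (if (chainTree (decide (0 < p.coeff d.1))
                ((d.1.support.filter (fun i => Odd (d.1 i))).toList)).eval x then (1:ℝ) else -1)
            = MvPolynomial.eval x p / W := by
          rw [Finset.sum_congr rfl (fun d _ => hoval d)]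
          rw [MvPolynomial.eval_eq, Finset.sum_div]
          rw [Finset.sum_coe_sort p.support
            (fun d => (p.coeff d / W) * ∏ i ∈ d.support, x i ^ d i)]
          exact Finset.sum_congr rfl fun d _ => by ring
        have hkey := key_lemma (fun d : {d // d ∈ p.support} => |p.coeff d.1| / W)
          (fun d => if (chainTree (decide (0 < p.coeff d.1))
            ((d.1.support.filter (fun i => Odd (d.1 i))).toList)).eval x then (1:ℝ) else -1)
          (f x) (fun d => by split_ifs <;> simp) (hf x hx) hsum1
        rw [hevp] at hkey
        have hpos : 0 < f x * (MvPolynomial.eval x p / W) := by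
          rw [mul_div_assoc'] at *
          exact div_pos (hsgn x hx) hWpos
        rw [hkey] at hpos
        linarith
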